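/- Let k ≥ 1. For any two distinct 2-element sets {a,b} and {a′,b′} in C_k with a < b and a′ < b′, one has a ≠ a′ and b ≠ b′ (i.e., distinct members of C_k have distinct minima and distinct maxima). -/
import Mathlib


/-- `Ok k` is the family `O_k = {{2j−1, 2j+1} : 1 ≤ j ≤ 2^{k−1}−1}` (empty for `k = 1`). -/
def Ok (k : ℕ) : Finset (Finset ℕ) :=
  (Finset.Icc 1 (2 ^ (k - 1) - 1)).image (fun j => ({2 * j - 1, 2 * j + 1} : Finset ℕ))

/-- `2·X := {{2a, 2b} : {a,b} ∈ X}`. -/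
def twoMul (X : Finset (Finset ℕ)) : Finset (Finset ℕ) :=
  X.image (fun s => s.image (fun a => 2 * a))

/-- `C_1 = ∅` and `C_k = O_k ∪ 2·C_{k−1}` for `k ≥ 2`. -/
def Ck : ℕ → Finset (Finset ℕ)
  | 0 => ∅
  | 1 => ∅
  | (k + 2) => Ok (k + 2) ∪ twoMul (Ck (k + 1))

lemma mem_Ok_elim {k a b : ℕ} (h : ({a, b} : Finset ℕ) ∈ Ok k) (hab : a < b) :
    a % 2 = 1 ∧ b = a + 2 := by
  simp only [Ok, Finset.mem_image, Finset.mem_Icc] at h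
  obtain ⟨j, ⟨hj1, _⟩, hj⟩ := h
  have ha : a ∈ ({2 * j - 1, 2 * j + 1} : Finset ℕ) := by rw [hj]; simp
  have hb : b ∈ ({2 * j - 1, 2 * j + 1} : Finset ℕ) := by rw [hj]; simp
  simp only [Finset.mem_insert, Finset.mem_singleton] at ha hb
  omega

lemma mem_twoMul_elim {X : Finset (Finset ℕ)} {a b : ℕ}
    (h : ({a, b} : Finset ℕ) ∈ twoMul X) (hab : a < b) :
    a % 2 = 0 ∧ b % 2 = 0 ∧ ({a / 2, b / 2} : Finset ℕ) ∈ X := by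
  simp only [twoMul, Finset.mem_image] at h
  obtain ⟨t, ht, hteq⟩ := h
  have ha : a ∈ t.image (fun a => 2 * a) := by rw [hteq]; simp
  have hb : b ∈ t.image (fun a => 2 * a) := by rw [hteq]; simp
  simp only [Finset.mem_image] at ha hb
  obtain ⟨x, hx, hxa⟩ := ha
  obtain ⟨y, hy, hyb⟩ := hb
  have ht2 : t = {a / 2, b / 2} := by
    apply Finset.Subset.antisymm
    · intro z hz
      have hz2 : 2 * z ∈ ({a, b} : Finset ℕ) := by
        rw [← hteq]; exact Finset.mem_image_of_mem _ hz
      simp only [Finset.mem_insert, Finset.mem_singleton] at hz2 ⊢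
      omega
    · intro z hz
      simp only [Finset.mem_insert, Finset.mem_singleton] at hz
      rcases hz with rfl | rfl
      · have hax : a / 2 = x := by omega
        rw [hax]; exact hx
      · have hby : b / 2 = y := by omega
        rw [hby]; exact hy
  exact ⟨by omega, by omega, ht2 ▸ ht⟩

lemma key : ∀ k a b a' b', a < b → a' < b' → ({a, b} : Finset ℕ) ∈ Ck k →
    ({a', b'} : Finset ℕ) ∈ Ck k → (a = a' ∨ b = b') → a = a' ∧ b = b' := by
  intro k
  induction k using Nat.strong_induction_on with
  | _ k ih =>
    match k with
    | 0 => intro a b a' b' _ _ h1; simp [Ck] at h1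
    | 1 => intro a b a' b' _ _ h1; simp [Ck] at h1
    | (k + 2) =>
      intro a b a' b' hab hab' h1 h2 hor
      simp only [Ck, Finset.mem_union] at h1 h2
      rcases h1 with h1 | h1 <;> rcases h2 with h2 | h2
      · obtain ⟨p1, q1⟩ := mem_Ok_elim h1 hab
        obtain ⟨p2, q2⟩ := mem_Ok_elim h2 hab'
        omega
      · obtain ⟨p1, q1⟩ := mem_Ok_elim h1 hab
        obtain ⟨p2, q2, _⟩ := mem_twoMul_elim h2 hab'
        omega
      · obtain ⟨p1, q1, _⟩ := mem_twoMul_elim h1 hab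
        obtain ⟨p2, q2⟩ := mem_Ok_elim h2 hab'
        omega
      · obtain ⟨p1, q1, m1⟩ := mem_twoMul_elim h1 hab
        obtain ⟨p2, q2, m2⟩ := mem_twoMul_elim h2 hab'
        have := ih (k + 1) (by omega) (a / 2) (b / 2) (a' / 2) (b' / 2)
          (by omega) (by omega) m1 m2 (by omega)
        omega

/-- Distinct members of `C_k` have distinct minima and distinct maxima. -/
theorem stmt_0 (k : ℕ) (hk : 1 ≤ k) (a b a' b' : ℕ) (hab : a < b) (hab' : a' < b')
    (h1 : ({a, b} : Finset ℕ) ∈ Ck k) (h2 : ({a', b'} : Finset ℕ) ∈ Ck k)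
    (hne : ({a, b} : Finset ℕ) ≠ ({a', b'} : Finset ℕ)) :
    a ≠ a' ∧ b ≠ b' := by
  constructor
  · intro h
    obtain ⟨e1, e2⟩ := key k a b a' b' hab hab' h1 h2 (Or.inl h)
    exact hne (by rw [e1, e2])
  · intro h
    obtain ⟨e1, e2⟩ := key k a b a' b' hab hab' h1 h2 (Or.inr h)
    exact hne (by rw [e1, e2])
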